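/- arXiv:1012.0948 — 3 statements merged into one kernel-verified Lean document; each statement's English description precedes it below -/
import Mathlib

section
/- For 1 < p ≤ 2, set p* = p/(p-1) (so p* - 1 = 1/(p-1)) and α_p = p(1 - 1/p*)^{p-1}. Then for all real s, t ≥ 0, one has t^p - (p*-1)^p s^p ≤ α_p (t - (p*-1)s)(s+t)^{p-1}. -/
open Real Set

lemma claim1 {p : ℝ} (hp1 : 1 < p) (hp2 : p ≤ 2) {x : ℝ} (hx : 1 ≤ x * p) (hx1 : x ≤ 1) :
    (p-1) * x^(p-1) + (1/(p-1))^(p-1) * (1-x)^(p-1) ≤ p^(2-p) := by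
  set q := p - 1 with hq
  have hq0 : 0 < q := by simp only [hq]; linarith
  have hq1 : q ≤ 1 := by simp only [hq]; linarith
  have h1q : (0:ℝ) < 1 + q := by linarith
  have hpq : p = 1 + q := by rw [hq]; ring
  have hx0 : 0 ≤ x := by nlinarith
  have h1x : 0 ≤ 1 - x := by linarith
  have hxp : 1 ≤ x * (1 + q) := by rw [← hpq]; exact hx
  rw [show (2:ℝ) - p = 1 - q by rw [hq]; ring, hpq]
  have C := Real.concaveOn_rpow hq0.le hq1
  have key := C.2 (mem_Ici.2 hx0) (mem_Ici.2 (by positivity : (0:ℝ) ≤ (1-x)/q))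
    (by positivity : (0:ℝ) ≤ q/(1+q)) (by positivity : (0:ℝ) ≤ 1/(1+q))
    (by field_simp; ring)
  simp only [smul_eq_mul] at key
  set z := q/(1+q) * x + 1/(1+q) * ((1-x)/q) with hzdef
  have hz0 : 0 ≤ z := add_nonneg (by positivity) (by positivity)
  have h' : q * q * x + (1 - x) ≤ q := by
    nlinarith [mul_nonneg (sub_nonneg.2 hq1) (sub_nonneg.2 hxp)]
  have hz : z ≤ 1/(1+q) := by
    have e : z = (q*q*x + (1-x))/(q*(1+q)) := by rw [hzdef]; field_simp
    rw [e, div_le_div_iff₀ (by positivity) h1q]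
    nlinarith [h']
  -- z^q ≤ (1/(1+q))^q
  have hzq : z ^ q ≤ (1/(1+q)) ^ q := Real.rpow_le_rpow hz0 hz hq0.le
  -- (1+q) * (1/(1+q))^q = (1+q)^(1-q)
  have I1 : (1+q) * (1/(1+q)) ^ q = (1+q) ^ ((1:ℝ)-q) := by
    rw [eq_comm, Real.rpow_sub h1q, Real.rpow_one, one_div, Real.inv_rpow h1q.le,
      div_eq_mul_inv]
  -- ((1-x)/q)^q = (1/q)^q * (1-x)^q
  have I2 : ((1-x)/q) ^ q = (1/q) ^ q * (1-x) ^ q := by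
    rw [div_eq_mul_one_div, Real.mul_rpow h1x (by positivity)]
    ring

  have k2 := mul_le_mul_of_nonneg_left key h1q.le
  have e2 : (1+q) * (q/(1+q) * x ^ q + 1/(1+q) * ((1-x)/q) ^ q)
      = q * x ^ q + ((1-x)/q) ^ q := by field_simp
  rw [e2] at k2
  have k3 : (1+q) * z ^ q ≤ (1+q) ^ ((1:ℝ)-q) := by
    calc (1+q) * z ^ q ≤ (1+q) * (1/(1+q)) ^ q :=
          mul_le_mul_of_nonneg_left hzq h1q.le
      _ = (1+q) ^ ((1:ℝ)-q) := I1
  rw [I2] at k2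
  exact le_trans k2 k3

lemma lemA {q : ℝ} (hq0 : 0 < q) (hq1 : q ≤ 1) : (1+q)^((1:ℝ)-q) * q^q ≤ 1 := by
  have h1q : (0:ℝ) < 1 + q := by linarith
  have hA : (0:ℝ) < (1+q)^((1:ℝ)-q) * q^q := by positivity
  have hlog : Real.log ((1+q)^((1:ℝ)-q) * q^q) = (1-q) * Real.log (1+q) + q * Real.log q := by
    rw [Real.log_mul (by positivity) (by positivity), Real.log_rpow h1q, Real.log_rpow hq0]
  have hb1 : Real.log (1+q) ≤ q := by
    have := Real.log_le_sub_one_of_pos h1q; linarith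
  have hb2 : Real.log q ≤ q - 1 := Real.log_le_sub_one_of_pos hq0
  have hle : Real.log ((1+q)^((1:ℝ)-q) * q^q) ≤ 0 := by
    rw [hlog]
    nlinarith [mul_le_mul_of_nonneg_left hb1 (by linarith : (0:ℝ) ≤ 1 - q),
      mul_le_mul_of_nonneg_left hb2 hq0.le]
  calc (1+q)^((1:ℝ)-q) * q^q = Real.exp (Real.log ((1+q)^((1:ℝ)-q) * q^q)) :=
        (Real.exp_log hA).symm
    _ ≤ Real.exp 0 := Real.exp_le_exp.2 hle
    _ = 1 := Real.exp_zero

lemma claim2 {p : ℝ} (hp1 : 1 < p) (hp2 : p ≤ 2) {x : ℝ} (hx0 : 0 ≤ x) (hx : x * p ≤ 1) :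
    p^(2-p) ≤ (p-1) * x^(p-1) + (1/(p-1))^(p-1) * (1-x)^(p-1) := by
  set q := p - 1 with hq
  have hq0 : 0 < q := by simp only [hq]; linarith
  have hq1 : q ≤ 1 := by simp only [hq]; linarith
  have h1q : (0:ℝ) < 1 + q := by linarith
  have hpq : p = 1 + q := by rw [hq]; ring
  have hxp : x * (1 + q) ≤ 1 := by rw [← hpq]; exact hx
  have hx1 : x ≤ 1 := by nlinarith
  have h1x : 0 ≤ 1 - x := by linarith
  rw [show (2:ℝ) - p = 1 - q by rw [hq]; ring, hpq]
  have C := Real.concaveOn_rpow hq0.le hq1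
  -- chord bound for x^q on [0, 1/(1+q)]
  have B1 := C.2 (mem_Ici.2 le_rfl) (mem_Ici.2 (by positivity : (0:ℝ) ≤ 1/(1+q)))
    (by linarith : (0:ℝ) ≤ 1 - (1+q)*x) (by positivity : (0:ℝ) ≤ (1+q)*x)
    (by ring)
  simp only [smul_eq_mul, mul_zero, Real.zero_rpow (ne_of_gt hq0), zero_add] at B1
  rw [show (1+q)*x*(1/(1+q)) = x from by field_simp] at B1
  -- B1 : (1+q)*x*(1/(1+q))^q ≤ x^q  (hopefully)
  -- chord bound for (1-x)^q on [q/(1+q), 1]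
  have B2 := C.2 (mem_Ici.2 (by positivity : (0:ℝ) ≤ q/(1+q))) (mem_Ici.2 (zero_le_one))
    (by positivity : (0:ℝ) ≤ (1+q)*x) (by linarith : (0:ℝ) ≤ 1 - (1+q)*x)
    (by ring)
  simp only [smul_eq_mul, mul_one, Real.one_rpow] at B2
  rw [show (1+q)*x*(q/(1+q)) + (1-(1+q)*x) = 1 - x from by field_simp; ring] at B2
  -- identities
  have I1 : (1+q) * (1/(1+q)) ^ q = (1+q) ^ ((1:ℝ)-q) := by
    rw [eq_comm, Real.rpow_sub h1q, Real.rpow_one, one_div, Real.inv_rpow h1q.le,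
      div_eq_mul_inv]
  have I2 : (q/(1+q)) ^ q = q ^ q * (1/(1+q)) ^ q := by
    rw [div_eq_mul_one_div, Real.mul_rpow hq0.le (by positivity)]
  have I3 : (1/q) ^ q * q ^ q = 1 := by
    rw [← Real.mul_rpow (by positivity) hq0.le, one_div_mul_cancel (ne_of_gt hq0),
      Real.one_rpow]
  have hiQ : (0:ℝ) ≤ (1/q) ^ q := by positivity
  have hA' : (1+q) ^ ((1:ℝ)-q) ≤ (1/q) ^ q := by
    have hA := lemA hq0 hq1
    have hQpos : (0:ℝ) < q ^ q := Real.rpow_pos_of_pos hq0 q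
    nlinarith [I3]
  have L1 : q * ((1+q)*x*(1/(1+q))^q) ≤ q * x^q := mul_le_mul_of_nonneg_left B1 hq0.le
  have L2 : (1/q)^q * ((1+q)*x*(q/(1+q))^q + (1-(1+q)*x)) ≤ (1/q)^q * (1-x)^q :=
    mul_le_mul_of_nonneg_left B2 hiQ
  rw [I2] at L2
  have e5 : (1/q)^q * ((1+q)*x*(q^q*(1/(1+q))^q) + (1-(1+q)*x))
      = x*((1+q)*(1/(1+q))^q)*((1/q)^q*q^q) + (1/q)^q*(1-(1+q)*x) := by ring
  rw [e5, I3, I1, mul_one] at L2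
  have e6 : q * ((1+q)*x*(1/(1+q))^q) = q*x*((1+q)*(1/(1+q))^q) := by ring
  rw [e6, I1] at L1
  have prod : 0 ≤ (1 - (1+q)*x) * ((1/q)^q - (1+q)^((1:ℝ)-q)) :=
    mul_nonneg (by linarith) (by linarith)
  nlinarith [L1, L2, prod]

lemma key {p : ℝ} (hp1 : 1 < p) (hp2 : p ≤ 2) {x : ℝ} (hx0 : 0 ≤ x) (hx1 : x ≤ 1) :
    x^p - (1/(p-1))^p * (1-x)^p ≤ p^(2-p) * (p/(p-1)*x - 1/(p-1)) := by
  have hp0 : (0:ℝ) < p := by linarith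
  have hq0 : (0:ℝ) < p - 1 := by linarith
  set F : ℝ → ℝ := fun y => p^(2-p) * (p/(p-1)*y - 1/(p-1)) + (1/(p-1))^p * (1-y)^p - y^p
    with hF
  have hCp : ((1:ℝ)/(p-1))^p = (1/(p-1))^(p-1) * (1/(p-1)) := by
    have e : ((1:ℝ)/(p-1))^((p-1)+1) = (1/(p-1))^(p-1) * (1/(p-1)) := by
      rw [Real.rpow_add (by positivity), Real.rpow_one]
    rwa [show (p-1)+(1:ℝ) = p by ring] at e
  have hder : ∀ y : ℝ, HasDerivAt F
      (p^(2-p) * (p/(p-1)) + (1/(p-1))^p * (-1 * p * (1-y)^(p-1)) - p * y^(p-1)) y := by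
    intro y
    have d1 : HasDerivAt (fun y : ℝ => y ^ p) (p * y^(p-1)) y :=
      Real.hasDerivAt_rpow_const (Or.inr hp1.le)
    have inner : HasDerivAt (fun y : ℝ => 1 - y) (-1) y := by
      simpa using (hasDerivAt_id' y).const_sub (1:ℝ)
    have d2 : HasDerivAt (fun y : ℝ => (1-y) ^ p) (-1 * p * (1-y)^(p-1)) y :=
      inner.rpow_const (Or.inr hp1.le)
    have d3 : HasDerivAt (fun y : ℝ => p^(2-p) * (p/(p-1)*y - 1/(p-1)))
        (p^(2-p) * (p/(p-1))) y := by
      simpa using (((hasDerivAt_id y).const_mul (p/(p-1))).sub_const (1/(p-1))).const_mul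
        (p^(2-p))
    exact (d3.add (d2.const_mul _)).sub d1
  have hcont : Continuous F := by
    rw [continuous_iff_continuousAt]; exact fun y => (hder y).continuousAt
  have hmono : MonotoneOn F (Icc (1/p) 1) := by
    apply monotoneOn_of_deriv_nonneg (convex_Icc _ _) hcont.continuousOn
    · exact fun y _ => (hder y).differentiableAt.differentiableWithinAt
    · intro y hy
      rw [interior_Icc, mem_Ioo] at hy
      rw [(hder y).deriv]
      have hc1 := claim1 hp1 hp2 (x := y)
        ((div_lt_iff₀ hp0).1 hy.1).le hy.2.le
      have s1 := mul_le_mul_of_nonneg_left hc1 (show (0:ℝ) ≤ p/(p-1) by positivity)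
      have eq1 : p/(p-1) * ((p-1)*y^(p-1) + (1/(p-1))^(p-1)*(1-y)^(p-1))
          = p*y^(p-1) + (1/(p-1))^p * (p*(1-y)^(p-1)) := by
        rw [hCp]; field_simp
      rw [eq1] at s1
      nlinarith [s1]
  have hanti : AntitoneOn F (Icc 0 (1/p)) := by
    apply antitoneOn_of_deriv_nonpos (convex_Icc _ _) hcont.continuousOn
    · exact fun y _ => (hder y).differentiableAt.differentiableWithinAt
    · intro y hy
      rw [interior_Icc, mem_Ioo] at hy
      rw [(hder y).deriv]
      have hc2 := claim2 hp1 hp2 (x := y) hy.1.le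
        (by rw [← le_div_iff₀ hp0]; exact hy.2.le)
      have s1 := mul_le_mul_of_nonneg_left hc2 (show (0:ℝ) ≤ p/(p-1) by positivity)
      have eq1 : p/(p-1) * ((p-1)*y^(p-1) + (1/(p-1))^(p-1)*(1-y)^(p-1))
          = p*y^(p-1) + (1/(p-1))^p * (p*(1-y)^(p-1)) := by
        rw [hCp]; field_simp
      rw [eq1] at s1
      nlinarith [s1]
  have hval : F (1/p) = 0 := by
    rw [hF]
    have e1 : p/(p-1)*(1/p) - 1/(p-1) = 0 := by field_simp; ring
    have e2 : ((1:ℝ)/(p-1))^p * (1-1/p)^p = (1/p)^p := by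
      rw [← Real.mul_rpow (by positivity) (by rw [sub_nonneg, div_le_one hp0]; exact hp1.le)]
      rw [show (1:ℝ)/(p-1) * (1-1/p) = 1/p from by field_simp]
    simp only [e1, e2]; ring
  have hFx : 0 ≤ F x := by
    rcases le_total x (1/p) with hc | hc
    · have := hanti (mem_Icc.2 ⟨hx0, hc⟩) (mem_Icc.2 ⟨by positivity, le_rfl⟩) hc
      rw [hval] at this; exact this
    · have := hmono (mem_Icc.2 ⟨le_rfl, by rw [div_le_one hp0]; linarith⟩)
        (mem_Icc.2 ⟨hc, hx1⟩) hc
      rw [hval] at this; exact this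
  rw [hF] at hFx
  simp only at hFx
  linarith [hFx]

/-- One-dimensional Burkholder majorization: for `1 < p ≤ 2`, `p* = p/(p-1)`,
`α_p = p (1 - 1/p*)^(p-1)`, and all `s, t ≥ 0`,
`t^p - (p*-1)^p s^p ≤ α_p (t - (p*-1) s)(s+t)^(p-1)`. -/
theorem stmt_0 (p : ℝ) (hp1 : 1 < p) (hp2 : p ≤ 2)
    (s t : ℝ) (hs : 0 ≤ s) (ht : 0 ≤ t) :
    t ^ p - (p / (p - 1) - 1) ^ p * s ^ p ≤
      p * (1 - 1 / (p / (p - 1))) ^ (p - 1) *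
        ((t - (p / (p - 1) - 1) * s) * (s + t) ^ (p - 1)) := by
  have hp0 : (0:ℝ) < p := by linarith
  have hq0 : (0:ℝ) < p - 1 := by linarith
  have hc : p / (p - 1) - 1 = 1 / (p - 1) := by field_simp; ring
  have hα : 1 - 1 / (p / (p - 1)) = 1 / p := by
    rw [one_div_div]; field_simp; ring
  have hA2 : p ^ ((2:ℝ) - p) = p * (1/p) ^ (p-1) := by
    rw [show (2:ℝ) - p = 1 + -(p-1) by ring, Real.rpow_add hp0, Real.rpow_one,
      Real.rpow_neg hp0.le, ← Real.inv_rpow hp0.le, ← one_div]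
  rw [hc, hα, ← hA2]
  rcases eq_or_lt_of_le (by positivity : (0:ℝ) ≤ s + t) with hu | hu
  · have hs0 : s = 0 := by linarith
    have ht0 : t = 0 := by linarith
    simp [hs0, ht0, Real.zero_rpow (by positivity : p ≠ 0),
      Real.zero_rpow (by intro h; rw [sub_eq_zero] at h; linarith : p - 1 ≠ 0)]
  · set u := s + t with hudef
    set x := t / u with hxdef
    have hx0 : 0 ≤ x := by positivity
    have hx1 : x ≤ 1 := by rw [hxdef, div_le_one hu]; linarith
    have h1x : 0 ≤ 1 - x := by linarith
    have ht' : t = x * u := by rw [hxdef]; field_simp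
    have hs' : s = (1 - x) * u := by rw [hxdef]; field_simp; linarith [hudef]
    have hup : u ^ p = u ^ (p-1) * u := by
      have := Real.rpow_add_one (ne_of_gt hu) (p-1)
      rwa [show p - 1 + 1 = p by ring] at this
    have G := mul_le_mul_of_nonneg_right (key hp1 hp2 hx0 hx1)
      (show (0:ℝ) ≤ u ^ p by positivity)
    have E1 : t^p - (1/(p-1))^p * s^p = (x^p - (1/(p-1))^p * (1-x)^p) * u^p := by
      rw [ht', hs', Real.mul_rpow hx0 hu.le, Real.mul_rpow h1x hu.le]; ring
    have E2 : p^((2:ℝ)-p) * ((t - 1/(p-1)*s) * u^(p-1))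
        = p^((2:ℝ)-p) * (p/(p-1)*x - 1/(p-1)) * u^p := by
      rw [ht', hs', hup]; field_simp; ring
    rw [E1, E2]; exact G
end

section
/- For 1 < p ≤ 2 and all x, y ∈ ℝ², the inequality ‖y‖^p - (1/(p-1))^p ‖x‖^p ≤ α_p (‖y‖ - (1/(p-1))‖x‖)(‖x‖+‖y‖)^{p-1} holds, where α_p = p(1-1/p*)^{p-1} and p* = p/(p-1). -/
open Real Set

private lemma rpow_key_le {p : ℝ} (hp1 : 1 < p) (hp2 : p ≤ 2) {a b : ℝ}
    (hb : 0 < b) (hpb : p * b ≤ a + b) :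
    p ^ (2-p) * (a+b) ^ (p-2) ≤ b ^ (p-2) := by
  have hp0 : (0:ℝ) < p := by linarith
  have hab : 0 < a + b := lt_of_lt_of_le (by positivity) hpb
  have h1 : (p*b) ^ (2-p) ≤ (a+b) ^ (2-p) :=
    Real.rpow_le_rpow (by positivity) hpb (by linarith)
  rw [Real.mul_rpow hp0.le hb.le] at h1
  have e1 : (a+b) ^ (p-2) = ((a+b) ^ (2-p))⁻¹ := by
    rw [show p-2 = -(2-p) by ring, Real.rpow_neg hab.le]
  have e2 : b ^ (p-2) = (b ^ (2-p))⁻¹ := by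
    rw [show p-2 = -(2-p) by ring, Real.rpow_neg hb.le]
  have hb2 : 0 < b ^ (2-p) := Real.rpow_pos_of_pos hb _
  have hab2 : 0 < (a+b) ^ (2-p) := Real.rpow_pos_of_pos hab _
  rw [e1, e2, ← div_eq_mul_inv, ← one_div, div_le_div_iff₀ hab2 hb2]
  nlinarith [h1]

private lemma rpow_key_ge {p : ℝ} (hp1 : 1 < p) (hp2 : p ≤ 2) {a b : ℝ}
    (hb : 0 < b) (hab : 0 < a + b) (hpb : a + b ≤ p * b) :
    b ^ (p-2) ≤ p ^ (2-p) * (a+b) ^ (p-2) := by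
  have hp0 : (0:ℝ) < p := by linarith
  have h1 : (a+b) ^ (2-p) ≤ (p*b) ^ (2-p) :=
    Real.rpow_le_rpow hab.le hpb (by linarith)
  rw [Real.mul_rpow hp0.le hb.le] at h1
  have e1 : (a+b) ^ (p-2) = ((a+b) ^ (2-p))⁻¹ := by
    rw [show p-2 = -(2-p) by ring, Real.rpow_neg hab.le]
  have e2 : b ^ (p-2) = (b ^ (2-p))⁻¹ := by
    rw [show p-2 = -(2-p) by ring, Real.rpow_neg hb.le]
  have hb2 : 0 < b ^ (2-p) := Real.rpow_pos_of_pos hb _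
  have hab2 : 0 < (a+b) ^ (2-p) := Real.rpow_pos_of_pos hab _
  have hp2' : 0 < p ^ (2-p) := Real.rpow_pos_of_pos hp0 _
  rw [e1, e2, ← div_eq_mul_inv, ← one_div, div_le_div_iff₀ hb2 hab2]
  nlinarith [h1]

private lemma burk_key {p : ℝ} (hp1 : 1 < p) (hp2 : p ≤ 2) {a b : ℝ}
    (ha : 0 ≤ a) (hb : 0 ≤ b) :
    b ^ p - (1/(p-1)) ^ p * a ^ p ≤
      p ^ (2-p) * ((b - (1/(p-1))*a) * (a+b) ^ (p-1)) := by
  have hp0 : (0:ℝ) < p := by linarith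
  have hp1' : p - 1 ≠ 0 := by intro h; linarith [h]
  set c : ℝ := 1/(p-1) with hcdef
  have hc : 0 < c := one_div_pos.mpr (by linarith)
  rcases eq_or_lt_of_le ha with h0 | ha0
  · -- a = 0
    rw [← h0]
    have h00 : (0:ℝ) ^ p = 0 := Real.zero_rpow hp0.ne'
    rw [h00, mul_zero, mul_zero, sub_zero, sub_zero, zero_add]
    have hbb : b * b ^ (p-1) = b ^ p := by
      rw [show p = 1 + (p-1) by ring]
      rw [Real.rpow_add' hb (by simpa using hp0.ne')]
      rw [Real.rpow_one]
      ring_nf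
    rw [hbb]
    have hge1 : (1:ℝ) ≤ p ^ (2-p) := Real.one_le_rpow hp1.le (by linarith)
    nlinarith [Real.rpow_nonneg hb p]
  · -- a > 0
    set m : ℝ := c * a with hmdef
    have hm : 0 < m := by positivity
    set f : ℝ → ℝ := fun t => p ^ (2-p) * ((t - c*a) * (a+t) ^ (p-1)) - t ^ p + c ^ p * a ^ p with hfdef
    have hder : ∀ t : ℝ, 0 ≤ t → HasDerivAt f
        (p ^ (2-p) * (1 * (a+t) ^ (p-1) + (t - c*a) * ((p-1) * (a+t) ^ (p-2) * 1)) - p * t ^ (p-1)) t := by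
      intro t ht
      have habt : 0 < a + t := by linarith
      have d1 : HasDerivAt (fun s : ℝ => a + s) 1 t := (hasDerivAt_id t).const_add a
      have d2 : HasDerivAt (fun s : ℝ => (a+s) ^ (p-1)) ((p-1) * (a+t) ^ (p-1-1) * 1) t :=
        (Real.hasDerivAt_rpow_const (Or.inl habt.ne')).comp t d1
      rw [show p-1-1 = p-2 by ring] at d2
      have d3 : HasDerivAt (fun s : ℝ => s - c*a) 1 t := (hasDerivAt_id t).sub_const _
      have d4 := (d3.mul d2).const_mul (p ^ (2-p))
      have d6 : HasDerivAt (fun s : ℝ => s ^ p) (p * t ^ (p-1)) t :=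
        Real.hasDerivAt_rpow_const (Or.inr hp1.le)
      exact (d4.sub d6).add_const _
    have hc1 : (p-1) * c = 1 := by rw [hcdef]; field_simp
    -- derivative simplification for t > 0
    have hGsimp : ∀ t : ℝ, 0 < t →
        p ^ (2-p) * (1 * (a+t) ^ (p-1) + (t - c*a) * ((p-1) * (a+t) ^ (p-2) * 1)) - p * t ^ (p-1)
          = p * t * (p ^ (2-p) * (a+t) ^ (p-2) - t ^ (p-2)) := by
      intro t ht
      have habt : 0 < a + t := by linarith
      have e1 : (a+t) ^ (p-1) = (a+t) ^ (p-2) * (a+t) := by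
        rw [show p-1 = p-2+1 by ring, Real.rpow_add_one habt.ne']
      have e2 : t ^ (p-1) = t ^ (p-2) * t := by
        rw [show p-1 = p-2+1 by ring, Real.rpow_add_one ht.ne']
      rw [e1, e2]
      linear_combination (-(p ^ (2-p) * (a+t) ^ (p-2) * a)) * hc1
    have hanti : AntitoneOn f (Icc 0 m) := by
      apply antitoneOn_of_deriv_nonpos (convex_Icc _ _)
      · intro t ht
        exact (hder t ht.1).continuousAt.continuousWithinAt
      · intro t ht
        rw [interior_Icc] at ht
        exact (hder t ht.1.le).differentiableAt.differentiableWithinAt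
      · intro t ht
        rw [interior_Icc] at ht
        rw [(hder t ht.1.le).deriv, hGsimp t ht.1]
        have h' : (p-1) * m = a := by rw [hmdef]; linear_combination a * hc1
        have hpb : p * t ≤ a + t := by
          nlinarith [mul_le_mul_of_nonneg_left ht.2.le (by linarith : (0:ℝ) ≤ p-1)]
        have := rpow_key_le hp1 hp2 ht.1 hpb
        have hpt : 0 ≤ p * t := mul_nonneg hp0.le ht.1.le
        nlinarith
    have hmono : MonotoneOn f (Ici m) := by
      apply monotoneOn_of_deriv_nonneg (convex_Ici _)
      · intro t ht
        exact (hder t (hm.le.trans ht)).continuousAt.continuousWithinAt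
      · intro t ht
        rw [interior_Ici] at ht
        exact (hder t (hm.le.trans ht.le)).differentiableAt.differentiableWithinAt
      · intro t ht
        rw [interior_Ici] at ht
        have ht0 : 0 < t := hm.trans ht
        rw [(hder t ht0.le).deriv, hGsimp t ht0]
        have habt : 0 < a + t := by linarith
        have h' : (p-1) * m = a := by rw [hmdef]; linear_combination a * hc1
        have hpb : a + t ≤ p * t := by
          nlinarith [mul_le_mul_of_nonneg_left ht.le (by linarith : (0:ℝ) ≤ p-1)]
        have := rpow_key_ge hp1 hp2 ht0 habt hpb
        have hpt : 0 ≤ p * t := mul_nonneg hp0.le ht0.le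
        nlinarith
    have hfm : f m = 0 := by
      rw [hfdef]
      simp only [hmdef]
      rw [sub_self, zero_mul, mul_zero, Real.mul_rpow hc.le ha]
      ring
    have hfb : 0 ≤ f b := by
      rcases le_total b m with h | h
      · have := hanti (by exact ⟨hb, h⟩) (by exact ⟨hm.le, le_refl m⟩) h
        linarith [hfm ▸ this]
      · have := hmono (by exact self_mem_Ici) (by exact h) h
        linarith [hfm ▸ this]
    rw [hfdef] at hfb
    simp only at hfb
    rw [hmdef]
    linarith

/-- Burkholder's majorization `v ≤ u` in ℝ²: for `1 < p ≤ 2` and all `x, y ∈ ℝ²`,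
`‖y‖^p - (1/(p-1))^p ‖x‖^p ≤ α_p (‖y‖ - (1/(p-1))‖x‖)(‖x‖+‖y‖)^(p-1)`,
where `α_p = p (1 - 1/p*)^(p-1)` with `p* = p/(p-1)`. -/
theorem stmt_4 (p : ℝ) (hp1 : 1 < p) (hp2 : p ≤ 2)
    (x y : EuclideanSpace ℝ (Fin 2)) :
    ‖y‖ ^ p - (1 / (p - 1)) ^ p * ‖x‖ ^ p ≤
      p * (1 - 1 / (p / (p - 1))) ^ (p - 1) *
        ((‖y‖ - (1 / (p - 1)) * ‖x‖) * (‖x‖ + ‖y‖) ^ (p - 1)) := by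
  have hp0 : (0:ℝ) < p := by linarith
  have hp1' : p - 1 ≠ 0 := by intro h; linarith [h]
  have hcoef : p * (1 - 1 / (p / (p - 1))) ^ (p - 1) = p ^ (2-p) := by
    have h1 : 1 - 1 / (p / (p - 1)) = 1/p := by
      field_simp
      ring
    rw [h1, one_div, Real.inv_rpow hp0.le]
    have h2 : p ^ (2-p) * p ^ (p-1) = p := by
      rw [← Real.rpow_add hp0]; norm_num
    have h3 : (0:ℝ) < p ^ (p-1) := Real.rpow_pos_of_pos hp0 _
    field_simp
    linarith [h2]
  rw [hcoef]
  exact burk_key hp1 hp2 (norm_nonneg x) (norm_nonneg y)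
end

section
/- Let 1 < p ≤ 2 and define u(x,y) = α_p(‖y‖ - (1/(p-1))‖x‖)(‖x‖+‖y‖)^{p-1} on ℝ²×ℝ² with α_p = p^{2-p}. Then for any x, y, h, k ∈ ℝ² with x ≠ 0, y ≠ 0, ‖k‖ ≤ ‖h‖, the function G(t) = u(x+th, y+tk) satisfies G''(0) ≤ 0. -/
open Real Filter

lemma hasDerivAt_quad (A B C t : ℝ) :
    HasDerivAt (fun s : ℝ => A + B*s + C*s^2) (B + 2*C*t) t := by
  have h1 : HasDerivAt (fun s : ℝ => A + B*s + C*s^2)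
      ((0 + B*1) + C*(↑2*t^(2-1))) t :=
    (((hasDerivAt_const t A).add ((hasDerivAt_id t).const_mul B)).add
      ((hasDerivAt_pow 2 t).const_mul C))
  convert h1 using 1
  push_cast; ring

lemma hasDerivAt_sqrt_quad {A B C t : ℝ} (h : 0 < A + B*t + C*t^2) :
    HasDerivAt (fun s : ℝ => Real.sqrt (A + B*s + C*s^2))
      ((B + 2*C*t) / (2 * Real.sqrt (A + B*t + C*t^2))) t := by
  have := (Real.hasDerivAt_sqrt (ne_of_gt h)).comp t (hasDerivAt_quad A B C t)
  refine this.congr_deriv ?_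
  ring

lemma keyineq (q A B D1 D2 H2 K2 : ℝ) (hq0 : 0 < q) (hq1 : q ≤ 1)
    (hA : 0 < A) (hB : 0 < B) (h1 : D1^2 ≤ H2) (h2 : D2^2 ≤ K2) (h3 : K2 ≤ H2) :
    (q*A*(K2-D2^2) - B*(H2-D1^2))*(A+B)^2 + 2*q*A*B*(q*D2-D1)*(D1+D2)*(A+B)
      + (q*B-A)*(q*(q-1)*A*B*(D1+D2)^2 + q*(A+B)*(B*(H2-D1^2)+A*(K2-D2^2))) ≤ 0 := by
  have e : (q*A*(K2-D2^2) - B*(H2-D1^2))*(A+B)^2 + 2*q*A*B*(q*D2-D1)*(D1+D2)*(A+B)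
      + (q*B-A)*(q*(q-1)*A*B*(D1+D2)^2 + q*(A+B)*(B*(H2-D1^2)+A*(K2-D2^2)))
      = -((1-q^2)*B*(A+B)^2*(H2-D1^2)) - q*(1+q)*A*B*(A+B)*(H2-K2)
        - q*(1-q^2)*A*B^2*(D1+D2)^2 := by ring
  rw [e]
  have hq2 : q^2 ≤ 1 := by nlinarith
  have hd1 : 0 ≤ H2 - D1^2 := by linarith
  have t1 : 0 ≤ (1-q^2)*B*(A+B)^2*(H2-D1^2) :=
    mul_nonneg (mul_nonneg (mul_nonneg (by linarith) hB.le) (sq_nonneg _)) hd1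
  have t2 : 0 ≤ q*(1+q)*A*B*(A+B)*(H2-K2) :=
    mul_nonneg (by positivity) (by linarith)
  have t3 : 0 ≤ q*(1-q^2)*A*B^2*(D1+D2)^2 :=
    mul_nonneg (mul_nonneg (mul_nonneg (mul_nonneg hq0.le (by linarith)) hA.le) (by positivity)) (sq_nonneg _)
  linarith

set_option maxHeartbeats 1000000 in
lemma key_s16 (p a b β γ h2 k2 : ℝ) (hp1 : 1 < p) (hp2 : p ≤ 2)
    (ha : 0 < a) (hb : 0 < b)
    (hCSx : β^2 ≤ a^2*h2) (hCSy : γ^2 ≤ b^2*k2) (hkh : k2 ≤ h2) :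
    deriv (deriv (fun t : ℝ =>
      p ^ (2-p) *
        ((Real.sqrt (b^2 + 2*γ*t + k2*t^2) - (1/(p-1)) * Real.sqrt (a^2 + 2*β*t + h2*t^2)) *
          (Real.sqrt (a^2 + 2*β*t + h2*t^2) + Real.sqrt (b^2 + 2*γ*t + k2*t^2)) ^ (p-1)))) 0
      ≤ 0 := by
  set α : ℝ := p ^ (2-p) with hα
  set c : ℝ := 1/(p-1) with hc
  set f : ℝ → ℝ := fun t => Real.sqrt (a^2 + 2*β*t + h2*t^2) with hf
  set g : ℝ → ℝ := fun t => Real.sqrt (b^2 + 2*γ*t + k2*t^2) with hg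
  set φ : ℝ → ℝ := fun t => (β + h2*t) / f t with hφ
  set ψ : ℝ → ℝ := fun t => (γ + k2*t) / g t with hψ
  set G1 : ℝ → ℝ := fun t => α * ((ψ t - c * φ t) * (f t + g t) ^ (p-1) +
      (g t - c * f t) * ((p-1) * (f t + g t) ^ (p-2) * (φ t + ψ t))) with hG1
  -- eventual positivity of the quadratics
  have hev : ∀ᶠ t in nhds (0:ℝ), 0 < a^2 + 2*β*t + h2*t^2 ∧ 0 < b^2 + 2*γ*t + k2*t^2 := by
    have hc1 : ContinuousAt (fun t : ℝ => a^2 + 2*β*t + h2*t^2) 0 := by fun_prop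
    have hc2 : ContinuousAt (fun t : ℝ => b^2 + 2*γ*t + k2*t^2) 0 := by fun_prop
    have h01 : (0:ℝ) < a^2 + 2*β*0 + h2*0^2 := by nlinarith
    have h02 : (0:ℝ) < b^2 + 2*γ*0 + k2*0^2 := by nlinarith
    exact (continuousAt_const.eventually_lt hc1 h01).and
      (continuousAt_const.eventually_lt hc2 h02)
  -- derivative pieces at a point where the quadratics are positive
  have piece : ∀ t : ℝ, 0 < a^2 + 2*β*t + h2*t^2 → 0 < b^2 + 2*γ*t + k2*t^2 →
      HasDerivAt f (φ t) t ∧ HasDerivAt g (ψ t) t ∧ 0 < f t ∧ 0 < g t := by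
    intro t hQ1 hQ2
    have hft : 0 < f t := Real.sqrt_pos.mpr hQ1
    have hgt : 0 < g t := Real.sqrt_pos.mpr hQ2
    have hdf : HasDerivAt f (φ t) t := by
      have h1 : HasDerivAt f ((2*β + 2*h2*t) / (2 * f t)) t := hasDerivAt_sqrt_quad hQ1
      have e3 : φ t = (2*β + 2*h2*t) / (2 * f t) := by
        show (β + h2*t) / f t = _
        rw [show 2*β + 2*h2*t = 2*(β + h2*t) by ring, mul_div_mul_left _ _ two_ne_zero]
      rw [e3]; exact h1
    have hdg : HasDerivAt g (ψ t) t := by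
      have h1 : HasDerivAt g ((2*γ + 2*k2*t) / (2 * g t)) t := hasDerivAt_sqrt_quad hQ2
      have e3 : ψ t = (2*γ + 2*k2*t) / (2 * g t) := by
        show (γ + k2*t) / g t = _
        rw [show 2*γ + 2*k2*t = 2*(γ + k2*t) by ring, mul_div_mul_left _ _ two_ne_zero]
      rw [e3]; exact h1
    exact ⟨hdf, hdg, hft, hgt⟩
  -- HasDerivAt of G at points of positivity
  have hG : ∀ t : ℝ, 0 < a^2 + 2*β*t + h2*t^2 → 0 < b^2 + 2*γ*t + k2*t^2 →
      HasDerivAt (fun u : ℝ => α * ((g u - c * f u) * (f u + g u) ^ (p-1))) (G1 t) t := by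
    intro t hQ1 hQ2
    obtain ⟨hdf, hdg, hft, hgt⟩ := piece t hQ1 hQ2
    have hF : 0 < f t + g t := by linarith
    have hdF : HasDerivAt (fun u => f u + g u) (φ t + ψ t) t := hdf.add hdg
    have hdR : HasDerivAt (fun u => (f u + g u) ^ (p-1))
        ((p-1) * (f t + g t) ^ (p-2) * (φ t + ψ t)) t := by
      have := (Real.hasDerivAt_rpow_const (x := f t + g t) (p := p-1)
        (Or.inl hF.ne')).comp t hdF
      refine this.congr_deriv ?_
      rw [show p - 1 - 1 = p - 2 by ring]
    have hdP : HasDerivAt (fun u => g u - c * f u) (ψ t - c * φ t) t :=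
      hdg.sub (hdf.const_mul c)
    exact (hdP.mul hdR).const_mul α
  -- the first derivative eventually equals G1
  have hd1 : deriv (fun t : ℝ => α *
      ((g t - c * f t) * (f t + g t) ^ (p-1))) =ᶠ[nhds (0:ℝ)] G1 :=
    hev.mono (fun t ht => (hG t ht.1 ht.2).deriv)
  have h0 : deriv (deriv (fun t : ℝ => α *
      ((g t - c * f t) * (f t + g t) ^ (p-1)))) 0 = deriv G1 0 := hd1.deriv_eq
  rw [h0]
  -- values at 0
  have ef0 : f 0 = a := by
    show Real.sqrt (a^2 + 2*β*0 + h2*0^2) = a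
    rw [show a^2 + 2*β*0 + h2*0^2 = a^2 by ring]; exact Real.sqrt_sq ha.le
  have eg0 : g 0 = b := by
    show Real.sqrt (b^2 + 2*γ*0 + k2*0^2) = b
    rw [show b^2 + 2*γ*0 + k2*0^2 = b^2 by ring]; exact Real.sqrt_sq hb.le
  have hQ10 : 0 < a^2 + 2*β*0 + h2*0^2 := by nlinarith
  have hQ20 : 0 < b^2 + 2*γ*0 + k2*0^2 := by nlinarith
  obtain ⟨hdf0', hdg0', hft0, hgt0⟩ := piece 0 hQ10 hQ20
  have eφ0 : φ 0 = β/a := by show (β + h2*0)/f 0 = β/a; rw [ef0]; norm_num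
  have eψ0 : ψ 0 = γ/b := by show (γ + k2*0)/g 0 = γ/b; rw [eg0]; norm_num
  have hdf0 : HasDerivAt f (β/a) 0 := eφ0 ▸ hdf0'
  have hdg0 : HasDerivAt g (γ/b) 0 := eψ0 ▸ hdg0'
  set d1 : ℝ := β/a with hd1
  set d2 : ℝ := γ/b with hd2
  set F1 : ℝ := (h2 - d1^2)/a with hF1
  set F2 : ℝ := (k2 - d2^2)/b with hF2
  have hq : 0 < p - 1 := by linarith
  have hab : (0:ℝ) < a + b := by linarith
  have hdφ : HasDerivAt φ F1 0 := by
    have hnum : HasDerivAt (fun t : ℝ => β + h2*t) h2 0 := by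
      simpa using ((hasDerivAt_id (0:ℝ)).const_mul h2).const_add β
    have hdd := hnum.div hdf0 (by rw [ef0]; exact ha.ne')
    refine hdd.congr_deriv ?_
    rw [ef0, hF1, hd1]
    field_simp
    ring
  have hdψ : HasDerivAt ψ F2 0 := by
    have hnum : HasDerivAt (fun t : ℝ => γ + k2*t) k2 0 := by
      simpa using ((hasDerivAt_id (0:ℝ)).const_mul k2).const_add γ
    have hdd := hnum.div hdg0 (by rw [eg0]; exact hb.ne')
    refine hdd.congr_deriv ?_
    rw [eg0, hF2, hd2]
    field_simp
    ring
  have hdF0 : HasDerivAt (fun u => f u + g u) (d1 + d2) 0 := hdf0.add hdg0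
  have eF0 : f 0 + g 0 = a + b := by rw [ef0, eg0]
  have hR1 : HasDerivAt (fun u => (f u + g u) ^ (p-1))
      ((p-1) * (a+b)^(p-2) * (d1+d2)) 0 := by
    have hdd := (Real.hasDerivAt_rpow_const (x := f 0 + g 0) (p := p-1)
      (Or.inl (by rw [eF0]; exact hab.ne'))).comp 0 hdF0
    refine hdd.congr_deriv ?_
    rw [eF0, show p - 1 - 1 = p - 2 by ring]
  have hR2' : HasDerivAt (fun u => (f u + g u) ^ (p-2))
      ((p-2) * (a+b)^(p-3) * (d1+d2)) 0 := by
    have hdd := (Real.hasDerivAt_rpow_const (x := f 0 + g 0) (p := p-2)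
      (Or.inl (by rw [eF0]; exact hab.ne'))).comp 0 hdF0
    refine hdd.congr_deriv ?_
    rw [eF0, show p - 2 - 1 = p - 3 by ring]
  have hsum : HasDerivAt (fun u => φ u + ψ u) (F1 + F2) 0 := hdφ.add hdψ
  have hR2 : HasDerivAt (fun u => (p-1) * (f u + g u) ^ (p-2) * (φ u + ψ u))
      (((p-1) * ((p-2) * (a+b)^(p-3) * (d1+d2))) * (d1+d2)
        + ((p-1) * (a+b)^(p-2)) * (F1+F2)) 0 := by
    have hdd := (hR2'.const_mul (p-1)).mul hsum
    refine hdd.congr_deriv ?_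
    rw [eF0, eφ0, eψ0]
  have hdP1 : HasDerivAt (fun u => ψ u - c * φ u) (F2 - c * F1) 0 :=
    hdψ.sub (hdφ.const_mul c)
  have hdP2 : HasDerivAt (fun u => g u - c * f u) (d2 - c * d1) 0 :=
    hdg0.sub (hdf0.const_mul c)
  have hD : HasDerivAt G1
      (α * (((F2 - c*F1) * (f 0 + g 0)^(p-1)
          + (ψ 0 - c * φ 0) * ((p-1) * (a+b)^(p-2) * (d1+d2)))
        + ((d2 - c*d1) * ((p-1) * (f 0 + g 0) ^ (p-2) * (φ 0 + ψ 0))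
          + (g 0 - c * f 0) * (((p-1) * ((p-2) * (a+b)^(p-3) * (d1+d2))) * (d1+d2)
            + ((p-1) * (a+b)^(p-2)) * (F1+F2))))) 0 :=
    ((hdP1.mul hR1).add (hdP2.mul hR2)).const_mul α
  rw [hD.deriv, eφ0, eψ0, ef0, eg0]
  -- final inequality
  have epow1 : (a+b)^(p-1) = (a+b)^(p-3) * (a+b)^(2:ℕ) := by
    rw [show p-1 = (p-3) + ((2:ℕ):ℝ) by push_cast; ring,
      Real.rpow_add hab, Real.rpow_natCast]
  have epow2 : (a+b)^(p-2) = (a+b)^(p-3) * (a+b) := by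
    rw [show p-2 = (p-3) + 1 by ring, Real.rpow_add hab, Real.rpow_one]
  have hW : (F2 - c*F1)*(a+b)^(2:ℕ) + 2*(p-1)*(d2 - c*d1)*(d1+d2)*(a+b)
      + (b - c*a)*((p-1)*(p-2)*(d1+d2)^2 + (p-1)*(a+b)*(F1+F2)) ≤ 0 := by
    have hd1sq : d1^2 ≤ h2 := by
      rw [hd1, div_pow, div_le_iff₀ (by positivity)]
      nlinarith
    have hd2sq : d2^2 ≤ k2 := by
      rw [hd2, div_pow, div_le_iff₀ (by positivity)]
      nlinarith
    have hKL := keyineq (p-1) a b d1 d2 h2 k2 hq (by linarith) ha hb hd1sq hd2sq hkh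
    have hident : ((p-1)*a*b) * ((F2 - c*F1)*(a+b)^(2:ℕ)
          + 2*(p-1)*(d2 - c*d1)*(d1+d2)*(a+b)
          + (b - c*a)*((p-1)*(p-2)*(d1+d2)^2 + (p-1)*(a+b)*(F1+F2)))
        = ((p-1)*a*(k2-d2^2) - b*(h2-d1^2))*(a+b)^2
          + 2*(p-1)*a*b*((p-1)*d2-d1)*(d1+d2)*(a+b)
          + ((p-1)*b-a)*((p-1)*((p-1)-1)*a*b*(d1+d2)^2
            + (p-1)*(a+b)*(b*(h2-d1^2)+a*(k2-d2^2))) := by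
      rw [hF1, hF2, hc]
      field_simp
      ring
    nlinarith [hident, hKL, mul_pos (mul_pos hq ha) hb]
  have hα0 : (0:ℝ) ≤ α := Real.rpow_nonneg (by linarith) _
  have hP3 : (0:ℝ) ≤ (a+b)^(p-3) := Real.rpow_nonneg hab.le _
  have hEq : α * (((F2 - c*F1) * (a+b)^(p-1)
          + (d2 - c * d1) * ((p-1) * (a+b)^(p-2) * (d1+d2)))
        + ((d2 - c*d1) * ((p-1) * (a+b) ^ (p-2) * (d1 + d2))
          + (b - c * a) * (((p-1) * ((p-2) * (a+b)^(p-3) * (d1+d2))) * (d1+d2)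
            + ((p-1) * (a+b)^(p-2)) * (F1+F2))))
      = α * ((a+b)^(p-3) * ((F2 - c*F1)*(a+b)^(2:ℕ)
          + 2*(p-1)*(d2 - c*d1)*(d1+d2)*(a+b)
          + (b - c*a)*((p-1)*(p-2)*(d1+d2)^2 + (p-1)*(a+b)*(F1+F2)))) := by
    rw [epow1, epow2]
    ring
  rw [hEq]
  exact mul_nonpos_iff.mpr (Or.inl ⟨hα0, mul_nonpos_iff.mpr (Or.inl ⟨hP3, hW⟩)⟩)


lemma norm_eq_sqrt_quad (x h : EuclideanSpace ℝ (Fin 2)) (t : ℝ) :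
    ‖x + t • h‖ = Real.sqrt (‖x‖^2 + 2*(inner ℝ x h : ℝ)*t + ‖h‖^2*t^2) := by
  rw [← Real.sqrt_sq (norm_nonneg (x + t • h))]
  congr 1
  rw [norm_add_sq_real, real_inner_smul_right, norm_smul]
  simp only [Real.norm_eq_abs, mul_pow, sq_abs]
  ring

/-- Diagonal concavity of Burkholder's function: for `1 < p ≤ 2`,
`u(x,y) = p^(2-p) (‖y‖ - (1/(p-1))‖x‖)(‖x‖+‖y‖)^(p-1)`, and `x ≠ 0`, `y ≠ 0`,
`‖k‖ ≤ ‖h‖`, the function `G(t) = u(x+th, y+tk)` satisfies `G''(0) ≤ 0`. -/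
theorem stmt_16 (p : ℝ) (hp1 : 1 < p) (hp2 : p ≤ 2)
    (x y h k : EuclideanSpace ℝ (Fin 2)) (hx : x ≠ 0) (hy : y ≠ 0)
    (hk : ‖k‖ ≤ ‖h‖) :
    deriv (deriv (fun t : ℝ =>
        p ^ (2 - p) *
          ((‖y + t • k‖ - (1 / (p - 1)) * ‖x + t • h‖) *
            (‖x + t • h‖ + ‖y + t • k‖) ^ (p - 1)))) 0 ≤ 0 := by
  have hx0 : (0:ℝ) < ‖x‖ := norm_pos_iff.mpr hx
  have hy0 : (0:ℝ) < ‖y‖ := norm_pos_iff.mpr hy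
  have hCSx : (inner ℝ x h : ℝ)^2 ≤ ‖x‖^2 * ‖h‖^2 := by
    have h1 := abs_real_inner_le_norm x h
    nlinarith [abs_nonneg (inner ℝ x h : ℝ), sq_abs (inner ℝ x h : ℝ)]
  have hCSy : (inner ℝ y k : ℝ)^2 ≤ ‖y‖^2 * ‖k‖^2 := by
    have h1 := abs_real_inner_le_norm y k
    nlinarith [abs_nonneg (inner ℝ y k : ℝ), sq_abs (inner ℝ y k : ℝ)]
  have hfun : (fun t : ℝ =>
        p ^ (2 - p) *
          ((‖y + t • k‖ - (1 / (p - 1)) * ‖x + t • h‖) *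
            (‖x + t • h‖ + ‖y + t • k‖) ^ (p - 1)))
      = (fun t : ℝ =>
        p ^ (2 - p) *
          ((Real.sqrt (‖y‖^2 + 2*(inner ℝ y k : ℝ)*t + ‖k‖^2*t^2)
              - (1 / (p - 1)) * Real.sqrt (‖x‖^2 + 2*(inner ℝ x h : ℝ)*t + ‖h‖^2*t^2)) *
            (Real.sqrt (‖x‖^2 + 2*(inner ℝ x h : ℝ)*t + ‖h‖^2*t^2)
              + Real.sqrt (‖y‖^2 + 2*(inner ℝ y k : ℝ)*t + ‖k‖^2*t^2)) ^ (p - 1))) := by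
    funext t
    rw [norm_eq_sqrt_quad x h t, norm_eq_sqrt_quad y k t]
  rw [hfun]
  exact key_s16 p ‖x‖ ‖y‖ (inner ℝ x h) (inner ℝ y k) (‖h‖^2) (‖k‖^2) hp1 hp2 hx0 hy0
    hCSx hCSy (by nlinarith [norm_nonneg k, norm_nonneg h])
end
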